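/- Let 0 < μ ≤ L and B ≥ 0, and for t ≥ 1 let η_t = 2/(μ·t + 2L − μ). Let Δ : {1, 2, 3, …} → ℝ be a sequence with Δ(t) ≥ 0 for all t, satisfying Δ(t+1) ≤ (1 − μ·η_t)·Δ(t) + η_t²·B for all t ≥ 1. Then for every t ≥ 1: Δ(t) ≤ (2/μ) · (μ·L·Δ(1) + 2B) / (μ·t + 2L − μ). In particular Δ(t) → 0 as t → ∞. -/

import Mathlib

open Filter

theorem slimfl_distance_convergence
    (μ L B : ℝ) (hμ : 0 < μ) (hμL : μ ≤ L) (hB : 0 ≤ B)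
    (η : ℕ → ℝ) (hη : ∀ t : ℕ, 1 ≤ t → η t = 2 / (μ * t + 2 * L - μ))
    (Δ : ℕ → ℝ) (hΔnonneg : ∀ t, 0 ≤ Δ t)
    (hrec : ∀ t : ℕ, 1 ≤ t → Δ (t + 1) ≤ (1 - μ * η t) * Δ t + (η t) ^ 2 * B) :
    (∀ t : ℕ, 1 ≤ t →
      Δ t ≤ (2 / μ) * (μ * L * Δ 1 + 2 * B) / (μ * t + 2 * L - μ)) ∧
    Tendsto Δ atTop (nhds 0) := by
  have hL : 0 < L := lt_of_lt_of_le hμ hμL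
  set C := (2 / μ) * (μ * L * Δ 1 + 2 * B) with hC
  have hΔ1 := hΔnonneg 1
  have hCnum : 0 ≤ μ * L * Δ 1 + 2 * B := by positivity
  have hCnonneg : 0 ≤ C := mul_nonneg (by positivity) hCnum
  have hCμ : C * μ = 2 * (μ * L * Δ 1 + 2 * B) := by
    rw [hC]; field_simp
  have hprod : 0 ≤ μ * L * Δ 1 := by positivity
  have hCB : 4 * B ≤ C * μ := by linarith
  have hd : ∀ t : ℕ, 1 ≤ t → 2 * L ≤ μ * t + 2 * L - μ := by
    intro t ht
    have h1 : (1:ℝ) ≤ t := by exact_mod_cast ht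
    nlinarith
  have main : ∀ t : ℕ, 1 ≤ t → Δ t ≤ C / (μ * t + 2 * L - μ) := by
    intro t ht
    induction t, ht using Nat.le_induction with
    | base =>
      push_cast
      have he : μ * 1 + 2 * L - μ = 2 * L := by ring
      rw [he, le_div_iff₀ (by positivity)]
      have hmul : Δ 1 * (2 * L) * μ ≤ C * μ := by rw [hCμ]; nlinarith
      exact le_of_mul_le_mul_right hmul hμ
    | succ n hn ih =>
      have hdn := hd n hn
      set d : ℝ := μ * n + 2 * L - μ with hdd
      have hdpos : 0 < d := lt_of_lt_of_le (by positivity) hdn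
      have hd2μ : 2 * μ ≤ d := by linarith
      have hrec' := hrec n hn
      rw [hη n hn, ← hdd] at hrec'
      have hcast : μ * ((n : ℕ) + 1 : ℕ) + 2 * L - μ = d + μ := by
        push_cast [hdd]; ring
      rw [hcast]
      have hfac : 0 ≤ 1 - μ * (2 / d) := by
        have h1 : μ * (2 / d) = 2 * μ / d := by ring
        rw [sub_nonneg, h1, div_le_one hdpos]
        linarith
      have step1 : Δ (n + 1) ≤ (1 - μ * (2 / d)) * (C / d) + (2 / d) ^ 2 * B := by
        calc Δ (n + 1) ≤ (1 - μ * (2 / d)) * Δ n + (2 / d) ^ 2 * B := hrec'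
          _ ≤ (1 - μ * (2 / d)) * (C / d) + (2 / d) ^ 2 * B := by
              gcongr
      refine step1.trans ?_
      have expand : (1 - μ * (2 / d)) * (C / d) + (2 / d) ^ 2 * B
          = ((d - 2 * μ) * C + 4 * B) / d ^ 2 := by
        field_simp; ring
      rw [expand, div_le_div_iff₀ (by positivity) (by linarith)]
      have key : 0 ≤ C * μ * (d + 2 * μ) - 4 * B * (d + μ) := by nlinarith
      nlinarith
  refine ⟨main, ?_⟩
  have h1 : Tendsto (fun t : ℕ => μ * t) atTop atTop :=
    Tendsto.const_mul_atTop hμ tendsto_natCast_atTop_atTop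
  have h2 := tendsto_atTop_add_const_right atTop (2 * L - μ) h1
  have hdto : Tendsto (fun t : ℕ => μ * t + 2 * L - μ) atTop atTop := by
    have heq : (fun t : ℕ => μ * t + 2 * L - μ) = fun t : ℕ => μ * t + (2 * L - μ) := by
      funext t; ring
    rw [heq]; exact h2
  have hgto : Tendsto (fun t : ℕ => C / (μ * t + 2 * L - μ)) atTop (nhds 0) := by
    simpa [div_eq_mul_inv] using hdto.inv_tendsto_atTop.const_mul C
  apply squeeze_zero' (Eventually.of_forall fun t => hΔnonneg t) ?_ hgto
  filter_upwards [eventually_ge_atTop 1] with t ht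
  exact main t ht
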